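/- arXiv:2411.01052 — 3 statements merged into one kernel-verified Lean document; each statement's English description precedes it below -/
import Mathlib

section
/- For any probability measures μ, ν on ℝⁿ with finite second moment and invertible covariance, ℱ(μ,ν) ≤ 𝒢(μ,ν), where ℱ is the White Fourier discrepancy and 𝒢 the Gini discrepancy. -/
open MeasureTheory ProbabilityTheory Matrix

noncomputable section

/-- Euclidean norm of a vector in `ℝⁿ`. -/
def eN {n : ℕ} (v : Fin n → ℝ) : ℝ := Real.sqrt (∑ i, v i ^ 2)

/-- The characteristic function (Fourier transform) of `μ`. -/
def charF {n : ℕ} (μ : Measure (Fin n → ℝ)) (ξ : Fin n → ℝ) : ℂ :=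
  ∫ x, Complex.exp (-Complex.I * ∑ i, (ξ i : ℂ) * (x i : ℂ)) ∂μ

/-- The gradient of the characteristic function of `μ`. -/
def gradCharF {n : ℕ} (μ : Measure (Fin n → ℝ)) (ξ : Fin n → ℝ) (j : Fin n) : ℂ :=
  ∫ x, -Complex.I * (x j : ℂ) * Complex.exp (-Complex.I * ∑ i, (ξ i : ℂ) * (x i : ℂ)) ∂μ

/-- Euclidean norm of a complex vector. -/
def cN {n : ℕ} (v : Fin n → ℂ) : ℝ := Real.sqrt (∑ i, ‖v i‖ ^ 2)

/-- The Fourier discrepancy `sup_ξ |f̂₁ ∇f̂₂ − f̂₂ ∇f̂₁|` between two (whitened)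
measures. -/
def Fdisc {n : ℕ} (μ ν : Measure (Fin n → ℝ)) : ℝ :=
  ⨆ ξ : Fin n → ℝ, cN fun j => charF μ ξ * gradCharF ν ξ j - charF ν ξ * gradCharF μ ξ j

lemma aux_norm_e {n : ℕ} (ξ z : Fin n → ℝ) :
    ‖Complex.exp (-Complex.I * ∑ i, (ξ i : ℂ) * (z i : ℂ))‖ = 1 := by
  have hs : (∑ i, (ξ i : ℂ) * (z i : ℂ)) = ((∑ i, ξ i * z i : ℝ) : ℂ) := by push_cast; ring
  rw [hs, Complex.norm_exp]
  simp [Complex.mul_re]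

lemma aux_cont_e {n : ℕ} (ξ : Fin n → ℝ) :
    Continuous fun z : Fin n → ℝ => Complex.exp (-Complex.I * ∑ i, (ξ i : ℂ) * (z i : ℂ)) := by
  fun_prop

lemma aux_int_e {n : ℕ} (μ : Measure (Fin n → ℝ)) [IsProbabilityMeasure μ] (ξ : Fin n → ℝ) :
    Integrable (fun z => Complex.exp (-Complex.I * ∑ i, (ξ i : ℂ) * (z i : ℂ))) μ := by
  refine (integrable_const (1 : ℝ)).mono' (aux_cont_e ξ).aestronglyMeasurable ?_
  filter_upwards with z
  rw [aux_norm_e]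

lemma aux_int_ge {n : ℕ} (μ : Measure (Fin n → ℝ)) [IsProbabilityMeasure μ] (ξ : Fin n → ℝ)
    (j : Fin n) (hμ1 : Integrable (fun x => x j) μ) :
    Integrable (fun z : Fin n → ℝ =>
      -Complex.I * (z j : ℂ) * Complex.exp (-Complex.I * ∑ i, (ξ i : ℂ) * (z i : ℂ))) μ := by
  refine hμ1.abs.mono' ?_ ?_
  · have : Continuous fun z : Fin n → ℝ =>
        -Complex.I * (z j : ℂ) * Complex.exp (-Complex.I * ∑ i, (ξ i : ℂ) * (z i : ℂ)) := by
      have := aux_cont_e ξ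
      fun_prop
    exact this.aestronglyMeasurable
  · filter_upwards with z
    rw [norm_mul, aux_norm_e]
    simp

lemma aux_main {n : ℕ} (μ ν : Measure (Fin n → ℝ))
    [IsProbabilityMeasure μ] [IsProbabilityMeasure ν]
    (hμ1 : ∀ i, Integrable (fun x => x i) μ) (hν1 : ∀ i, Integrable (fun x => x i) ν) :
    Fdisc μ ν ≤ ∫ p : (Fin n → ℝ) × (Fin n → ℝ), eN (p.1 - p.2) ∂(μ.prod ν) := by
  rw [Fdisc]
  apply ciSup_le
  intro ξ
  set e : (Fin n → ℝ) → ℂ :=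
    fun z => Complex.exp (-Complex.I * ∑ i, (ξ i : ℂ) * (z i : ℂ)) with he
  set F : ((Fin n → ℝ) × (Fin n → ℝ)) → EuclideanSpace ℂ (Fin n) :=
    fun p => WithLp.toLp 2 (fun j => -Complex.I * (((p.2 j : ℂ)) - (p.1 j : ℂ)) * (e p.1 * e p.2)) with hF
  -- norm of F
  have habs : ∀ (p : (Fin n → ℝ) × (Fin n → ℝ)) (j : Fin n),
      ‖-Complex.I * (((p.2 j : ℂ)) - (p.1 j : ℂ)) * (e p.1 * e p.2)‖
        = |p.1 j - p.2 j| := by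
    intro p j
    have h1 : ∀ z, ‖e z‖ = 1 := fun z => by
      rw [he]; exact aux_norm_e ξ z
    rw [norm_mul, norm_mul, norm_mul, h1, h1,
      ← Complex.ofReal_sub, Complex.norm_real, Real.norm_eq_abs, abs_sub_comm]
    simp
  have hnormF : ∀ p : (Fin n → ℝ) × (Fin n → ℝ), ‖F p‖ = eN (p.1 - p.2) := by
    intro p
    rw [EuclideanSpace.norm_eq, eN]
    congr 1
    apply Finset.sum_congr rfl
    intro j _
    rw [hF]
    simp only [PiLp.toLp_apply, habs p j, sq_abs, Pi.sub_apply]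
  -- integrability of F
  have hFcont : Continuous F := by
    apply (PiLp.continuous_toLp 2 (fun _ : Fin n => ℂ)).comp
    apply continuous_pi
    intro j
    have hec : Continuous e := aux_cont_e ξ
    show Continuous fun p : (Fin n → ℝ) × (Fin n → ℝ) =>
      -Complex.I * ((p.2 j : ℂ) - (p.1 j : ℂ)) * (e p.1 * e p.2)
    fun_prop
  have hFint : Integrable F (μ.prod ν) := by
    have hg : Integrable (fun p : (Fin n → ℝ) × (Fin n → ℝ) =>
        ∑ j, (|p.1 j| + |p.2 j|)) (μ.prod ν) := by
      apply integrable_finset_sum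
      intro j _
      apply Integrable.add
      · simpa using ((hμ1 j).abs.mul_prod (integrable_const (1:ℝ)))
      · simpa using ((integrable_const (1:ℝ)).mul_prod (hν1 j).abs)
    refine hg.mono' hFcont.aestronglyMeasurable ?_
    filter_upwards with p
    rw [hnormF, eN]
    have h1 : ∑ i, (p.1 - p.2) i ^ 2 ≤ (∑ i, |(p.1 - p.2) i|) ^ 2 := by
      have := Finset.sum_sq_le_sq_sum_of_nonneg
        (s := Finset.univ) (f := fun i => |(p.1 - p.2) i|) (fun i _ => abs_nonneg _)
      simpa [sq_abs] using this
    calc Real.sqrt (∑ i, (p.1 - p.2) i ^ 2)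
        ≤ Real.sqrt ((∑ i, |(p.1 - p.2) i|) ^ 2) := Real.sqrt_le_sqrt h1
      _ = ∑ i, |(p.1 - p.2) i| :=
          Real.sqrt_sq (Finset.sum_nonneg fun i _ => abs_nonneg _)
      _ ≤ ∑ j, (|p.1 j| + |p.2 j|) := by
          apply Finset.sum_le_sum
          intro i _
          simpa [Pi.sub_apply] using abs_sub (p.1 i) (p.2 i)
  -- component identity
  have hcomp : ∀ j, charF μ ξ * gradCharF ν ξ j - charF ν ξ * gradCharF μ ξ j
      = ∫ p, F p j ∂(μ.prod ν) := by
    intro j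
    have h1 : charF μ ξ * gradCharF ν ξ j
        = ∫ p : (Fin n → ℝ) × (Fin n → ℝ),
            e p.1 * (-Complex.I * (p.2 j : ℂ) * e p.2) ∂(μ.prod ν) := by
      rw [show charF μ ξ = ∫ x, e x ∂μ from rfl,
        show gradCharF ν ξ j = ∫ y, -Complex.I * (y j : ℂ) * e y ∂ν from rfl]
      exact (integral_prod_mul _ _).symm
    have h2 : charF ν ξ * gradCharF μ ξ j
        = ∫ p : (Fin n → ℝ) × (Fin n → ℝ),
            (-Complex.I * (p.1 j : ℂ) * e p.1) * e p.2 ∂(μ.prod ν) := by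
      rw [show charF ν ξ = ∫ y, e y ∂ν from rfl,
        show gradCharF μ ξ j = ∫ x, -Complex.I * (x j : ℂ) * e x ∂μ from rfl, mul_comm]
      exact (integral_prod_mul _ _).symm
    rw [h1, h2, ← integral_sub]
    · apply integral_congr_ae
      filter_upwards with p
      rw [hF]
      simp only [PiLp.toLp_apply]
      ring
    · exact (aux_int_e μ ξ).mul_prod (aux_int_ge ν ξ j (hν1 j))
    · exact (aux_int_ge μ ξ j (hμ1 j)).mul_prod (aux_int_e ν ξ)
  -- conclude
  calc cN (fun j => charF μ ξ * gradCharF ν ξ j - charF ν ξ * gradCharF μ ξ j)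
      = ‖∫ p, F p ∂(μ.prod ν)‖ := by
        rw [cN, EuclideanSpace.norm_eq]
        congr 1
        apply Finset.sum_congr rfl
        intro j _
        have hproj := (EuclideanSpace.proj (𝕜 := ℂ) j).integral_comp_comm hFint
        have hcoord : (∫ p, F p ∂(μ.prod ν)) j = ∫ p, F p j ∂(μ.prod ν) := hproj.symm
        rw [hcomp j, ← hcoord]
    _ ≤ ∫ p, ‖F p‖ ∂(μ.prod ν) := norm_integral_le_integral_norm _
    _ = ∫ p : (Fin n → ℝ) × (Fin n → ℝ), eN (p.1 - p.2) ∂(μ.prod ν) :=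
        integral_congr_ae (Filter.Eventually.of_forall hnormF)

lemma aux_meas_mulVec {n : ℕ} (W : Matrix (Fin n) (Fin n) ℝ) : Measurable W.mulVec := by
  have : W.mulVec = ⇑(Matrix.mulVecLin W) := by
    ext v i; simp [Matrix.mulVecLin_apply]
  rw [this]
  exact (Matrix.mulVecLin W).continuous_of_finiteDimensional.measurable

lemma aux_int_coord_map {n : ℕ} (μ : Measure (Fin n → ℝ)) [IsProbabilityMeasure μ]
    (hμ2 : ∀ i, MemLp (fun x => x i) 2 μ) (W : Matrix (Fin n) (Fin n) ℝ) (i : Fin n) :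
    Integrable (fun x => x i) (μ.map W.mulVec) := by
  rw [integrable_map_measure (measurable_pi_apply i).aestronglyMeasurable
    (aux_meas_mulVec W).aemeasurable]
  show Integrable (fun x => W.mulVec x i) μ
  simp only [Matrix.mulVec, dotProduct]
  exact integrable_finset_sum _ fun k _ => ((hμ2 k).integrable one_le_two).const_mul _

/-- For probability measures with finite second moment and invertible covariance,
whitened by matrices `Wμ`, `Wν` (with `Wμ Σ_μ Wμᵀ = 1`, `Wν Σ_ν Wνᵀ = 1`), the
White Fourier discrepancy is bounded by the Gini discrepancy:
`ℱ(μ,ν) ≤ 𝒢(μ,ν) = ∬ |x* − y*| dμ*(x*) dν*(y*)`. -/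
theorem stmt11 {n : ℕ} (μ ν : Measure (Fin n → ℝ))
    [IsProbabilityMeasure μ] [IsProbabilityMeasure ν]
    (hμ2 : ∀ i, MemLp (fun x => x i) 2 μ) (hν2 : ∀ i, MemLp (fun x => x i) 2 ν)
    (Sμ Sν Wμ Wν : Matrix (Fin n) (Fin n) ℝ)
    (hSμ : ∀ i j, Sμ i j = ∫ x, (x i - ∫ x', x' i ∂μ) * (x j - ∫ x', x' j ∂μ) ∂μ)
    (hSν : ∀ i j, Sν i j = ∫ y, (y i - ∫ y', y' i ∂ν) * (y j - ∫ y', y' j ∂ν) ∂ν)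
    (hSμinv : IsUnit Sμ.det) (hSνinv : IsUnit Sν.det)
    (hWμ : Wμ * Sμ * Wμᵀ = 1) (hWν : Wν * Sν * Wνᵀ = 1) :
    Fdisc (μ.map Wμ.mulVec) (ν.map Wν.mulVec)
      ≤ ∫ p : (Fin n → ℝ) × (Fin n → ℝ), eN (p.1 - p.2)
          ∂((μ.map Wμ.mulVec).prod (ν.map Wν.mulVec)) := by
  haveI : IsProbabilityMeasure (μ.map Wμ.mulVec) :=
    Measure.isProbabilityMeasure_map (aux_meas_mulVec Wμ).aemeasurable
  haveI : IsProbabilityMeasure (ν.map Wν.mulVec) :=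
    Measure.isProbabilityMeasure_map (aux_meas_mulVec Wν).aemeasurable
  exact aux_main _ _ (aux_int_coord_map μ hμ2 Wμ) (aux_int_coord_map ν hν2 Wν)
end
end

section
/- Let μ, ν have whitened versions μ*, ν* (with identity covariances) and let π* be a W₁-optimal coupling of μ* and ν*. Then 𝒲(μ,ν) ≤ |m₁* − m₂*| + √(2n − 2 ∫ (x − m₁*)ᵀ(y − m₂*) dπ*(x,y)). -/
open MeasureTheory ProbabilityTheory Matrix

noncomputable section

/-- `π` is a coupling (transportation plan) between `μ` and `ν`. -/
def IsCoupling {n : ℕ} (μ ν : Measure (Fin n → ℝ))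
    (π : Measure ((Fin n → ℝ) × (Fin n → ℝ))) : Prop :=
  π.map Prod.fst = μ ∧ π.map Prod.snd = ν

/-- The 1-Wasserstein distance. -/
def W1 {n : ℕ} (μ ν : Measure (Fin n → ℝ)) : ℝ :=
  sInf { c | ∃ π : Measure ((Fin n → ℝ) × (Fin n → ℝ)),
    IsCoupling μ ν π ∧ c = ∫ p, eN (p.1 - p.2) ∂π }

lemma eN_nonneg {n : ℕ} (v : Fin n → ℝ) : 0 ≤ eN v := Real.sqrt_nonneg _

lemma eN_sq {n : ℕ} (v : Fin n → ℝ) : eN v ^ 2 = ∑ i, v i ^ 2 :=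
  Real.sq_sqrt (by positivity)

lemma eN_eq {n : ℕ} (v : Fin n → ℝ) : eN v = ‖(WithLp.equiv 2 (Fin n → ℝ)).symm v‖ := by
  rw [EuclideanSpace.norm_eq]; simp [eN, sq_abs, sq]

lemma eN_add_le {n : ℕ} (a b : Fin n → ℝ) : eN (a + b) ≤ eN a + eN b := by
  simp only [eN_eq, WithLp.equiv_symm_apply, WithLp.toLp_add]; exact norm_add_le _ _

lemma cs {α : Type*} [MeasurableSpace α] (π : Measure α) [IsProbabilityMeasure π]
    (f : α → ℝ) (hf : MemLp f 2 π) (hf0 : 0 ≤ f) :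
    ∫ a, f a ∂π ≤ Real.sqrt (∫ a, f a ^ 2 ∂π) := by
  have h := variance_nonneg f π
  rw [variance_eq_sub hf] at h
  refine (Real.le_sqrt (integral_nonneg hf0) (by positivity)).mpr ?_
  simpa using h

lemma int_mul {α : Type*} [MeasurableSpace α] {π : Measure α} {f g : α → ℝ}
    (hf : MemLp f 2 π) (hg : MemLp g 2 π) :
    Integrable (fun a => f a * g a) π := by
  have h1 := (hf.add hg).integrable_sq
  have h2 := hf.integrable_sq
  have h3 := hg.integrable_sq
  have := ((h1.sub h2).sub h3).div_const 2
  refine this.congr (Filter.Eventually.of_forall fun a => ?_)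
  simp only [Pi.sub_apply, Pi.add_apply]; ring

/-- For (whitened) probability measures `μ*`, `ν*` with identity covariance
matrices and means `m₁*`, `m₂*`, and a `W₁`-optimal coupling `π*` of them,
`𝒲(μ,ν) ≤ |m₁* − m₂*| + √(2n − 2 ∫ (x − m₁*)ᵀ(y − m₂*) dπ*(x,y))`. -/
theorem stmt16 {n : ℕ} (μ ν : Measure (Fin n → ℝ))
    [IsProbabilityMeasure μ] [IsProbabilityMeasure ν]
    (m₁ m₂ : Fin n → ℝ)
    (hμ2 : ∀ i, MemLp (fun x => x i) 2 μ) (hν2 : ∀ i, MemLp (fun y => y i) 2 ν)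
    (hm₁ : ∀ i, ∫ x, x i ∂μ = m₁ i) (hm₂ : ∀ i, ∫ y, y i ∂ν = m₂ i)
    (hcovμ : ∀ i j, ∫ x, (x i - m₁ i) * (x j - m₁ j) ∂μ
      = (1 : Matrix (Fin n) (Fin n) ℝ) i j)
    (hcovν : ∀ i j, ∫ y, (y i - m₂ i) * (y j - m₂ j) ∂ν
      = (1 : Matrix (Fin n) (Fin n) ℝ) i j)
    (π : Measure ((Fin n → ℝ) × (Fin n → ℝ))) (hπ : IsCoupling μ ν π)
    (hopt : W1 μ ν = ∫ p, eN (p.1 - p.2) ∂π) :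
    W1 μ ν ≤ eN (m₁ - m₂) +
      Real.sqrt (2 * n - 2 * ∫ p, (∑ i, (p.1 i - m₁ i) * (p.2 i - m₂ i)) ∂π) := by
  have hfst : MeasurePreserving Prod.fst π μ := ⟨measurable_fst, hπ.1⟩
  have hsnd : MeasurePreserving Prod.snd π ν := ⟨measurable_snd, hπ.2⟩
  have hπprob : IsProbabilityMeasure π := by
    constructor
    have := hfst.measure_preimage (μb := μ) MeasurableSet.univ.nullMeasurableSet
    simpa using this
  have hX : ∀ i, MemLp (fun p : (Fin n → ℝ) × (Fin n → ℝ) => p.1 i - m₁ i) 2 π := fun i =>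
    ((hμ2 i).comp_measurePreserving hfst).sub (memLp_const _)
  have hY : ∀ i, MemLp (fun p : (Fin n → ℝ) × (Fin n → ℝ) => p.2 i - m₂ i) 2 π := fun i =>
    ((hν2 i).comp_measurePreserving hsnd).sub (memLp_const _)
  have hZi : ∀ i, MemLp
      (fun p : (Fin n → ℝ) × (Fin n → ℝ) => (p.1 i - m₁ i) - (p.2 i - m₂ i)) 2 π :=
    fun i => (hX i).sub (hY i)
  have hIX : ∀ i, ∫ p, (p.1 i - m₁ i) ^ 2 ∂π = 1 := by
    intro i
    have hmeas : AEStronglyMeasurable (fun x : Fin n → ℝ => (x i - m₁ i) ^ 2)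
        (π.map Prod.fst) := by
      apply Measurable.aestronglyMeasurable
      exact ((measurable_pi_apply i).sub measurable_const).pow_const 2
    have h1 := integral_map (μ := π) measurable_fst.aemeasurable hmeas
    rw [hπ.1] at h1
    have h2 := hcovμ i i
    rw [Matrix.one_apply_eq] at h2
    rw [← h1, ← h2]
    congr 1; ext x; ring
  have hIY : ∀ i, ∫ p, (p.2 i - m₂ i) ^ 2 ∂π = 1 := by
    intro i
    have hmeas : AEStronglyMeasurable (fun y : Fin n → ℝ => (y i - m₂ i) ^ 2)
        (π.map Prod.snd) := by
      apply Measurable.aestronglyMeasurable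
      exact ((measurable_pi_apply i).sub measurable_const).pow_const 2
    have h1 := integral_map (μ := π) measurable_snd.aemeasurable hmeas
    rw [hπ.2] at h1
    have h2 := hcovν i i
    rw [Matrix.one_apply_eq] at h2
    rw [← h1, ← h2]
    congr 1; ext y; ring
  set f : ((Fin n → ℝ) × (Fin n → ℝ)) → ℝ :=
    fun p => eN ((p.1 - m₁) - (p.2 - m₂)) with hfdef
  have hf0 : 0 ≤ f := fun p => eN_nonneg _
  have hfsq : ∀ p, f p ^ 2 = ∑ i, ((p.1 i - m₁ i) - (p.2 i - m₂ i)) ^ 2 := by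
    intro p
    have h := eN_sq ((p.1 - m₁) - (p.2 - m₂))
    simpa [hfdef] using h
  have hfmeas : AEStronglyMeasurable f π := by
    have : Measurable f := by
      simp only [hfdef, eN]
      apply Measurable.sqrt
      apply Finset.measurable_sum
      intro i _
      exact ((measurable_fst.eval.sub measurable_const).sub
        (measurable_snd.eval.sub measurable_const)).pow_const 2
    exact this.aestronglyMeasurable
  have hZsq_int : Integrable
      (fun p : (Fin n → ℝ) × (Fin n → ℝ) =>
        ∑ i, ((p.1 i - m₁ i) - (p.2 i - m₂ i)) ^ 2) π :=
    integrable_finset_sum _ fun i _ => (hZi i).integrable_sq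
  have hfsq_int : Integrable (fun p => f p ^ 2) π :=
    hZsq_int.congr (Filter.Eventually.of_forall fun p => (hfsq p).symm)
  have hfL2 : MemLp f 2 π := (memLp_two_iff_integrable_sq hfmeas).mpr hfsq_int
  have hXY_int : ∀ i, Integrable
      (fun p : (Fin n → ℝ) × (Fin n → ℝ) => (p.1 i - m₁ i) * (p.2 i - m₂ i)) π :=
    fun i => int_mul (hX i) (hY i)
  have hIsum : ∫ p, (∑ i, (p.1 i - m₁ i) * (p.2 i - m₂ i)) ∂π
      = ∑ i, ∫ p, (p.1 i - m₁ i) * (p.2 i - m₂ i) ∂π :=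
    integral_finset_sum _ fun i _ => hXY_int i
  have hZi_int : ∀ i, ∫ p, ((p.1 i - m₁ i) - (p.2 i - m₂ i)) ^ 2 ∂π
      = 2 - 2 * ∫ p, (p.1 i - m₁ i) * (p.2 i - m₂ i) ∂π := by
    intro i
    have e : (fun p : (Fin n → ℝ) × (Fin n → ℝ) =>
        ((p.1 i - m₁ i) - (p.2 i - m₂ i)) ^ 2)
        = fun p => ((p.1 i - m₁ i) ^ 2 + (p.2 i - m₂ i) ^ 2)
          - 2 * ((p.1 i - m₁ i) * (p.2 i - m₂ i)) := by
      funext p; ring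
    have hA : Integrable (fun p : (Fin n → ℝ) × (Fin n → ℝ) => (p.1 i - m₁ i) ^ 2) π :=
      (hX i).integrable_sq
    have hB : Integrable (fun p : (Fin n → ℝ) × (Fin n → ℝ) => (p.2 i - m₂ i) ^ 2) π :=
      (hY i).integrable_sq
    have hC : Integrable (fun p : (Fin n → ℝ) × (Fin n → ℝ) =>
        2 * ((p.1 i - m₁ i) * (p.2 i - m₂ i))) π := (hXY_int i).const_mul 2
    have hAB : Integrable (fun p : (Fin n → ℝ) × (Fin n → ℝ) =>
        (p.1 i - m₁ i) ^ 2 + (p.2 i - m₂ i) ^ 2) π := hA.add hB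
    rw [e, integral_sub hAB hC, integral_add hA hB, hIX i, hIY i,
      integral_const_mul]
    ring
  have hint_fsq : ∫ p, f p ^ 2 ∂π
      = 2 * n - 2 * ∫ p, (∑ i, (p.1 i - m₁ i) * (p.2 i - m₂ i)) ∂π := by
    rw [integral_congr_ae (Filter.Eventually.of_forall hfsq),
      integral_finset_sum _ (fun i _ => (hZi i).integrable_sq)]
    rw [Finset.sum_congr rfl fun i _ => hZi_int i, hIsum, Finset.sum_sub_distrib,
      ← Finset.mul_sum]
    simp [Finset.card_univ, mul_comm]
  have htri : ∀ p : (Fin n → ℝ) × (Fin n → ℝ),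
      eN (p.1 - p.2) ≤ eN (m₁ - m₂) + f p := by
    intro p
    have h : p.1 - p.2 = (m₁ - m₂) + ((p.1 - m₁) - (p.2 - m₂)) := by
      funext i; simp only [Pi.sub_apply, Pi.add_apply]; ring
    rw [h]; exact eN_add_le _ _
  have hf_int : Integrable f π := hfL2.integrable one_le_two
  have hgmeas : AEStronglyMeasurable
      (fun p : (Fin n → ℝ) × (Fin n → ℝ) => eN (p.1 - p.2)) π := by
    have : Measurable fun p : (Fin n → ℝ) × (Fin n → ℝ) => eN (p.1 - p.2) := by
      simp only [eN]
      apply Measurable.sqrt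
      apply Finset.measurable_sum
      intro i _
      exact (measurable_fst.eval.sub measurable_snd.eval).pow_const 2
    exact this.aestronglyMeasurable
  have hg_int : Integrable (fun p : (Fin n → ℝ) × (Fin n → ℝ) => eN (p.1 - p.2)) π := by
    refine Integrable.mono' ((integrable_const (eN (m₁ - m₂))).add hf_int) hgmeas ?_
    refine Filter.Eventually.of_forall fun p => ?_
    rw [Real.norm_of_nonneg (eN_nonneg _)]
    exact htri p
  rw [hopt]
  calc ∫ p, eN (p.1 - p.2) ∂π
      ≤ ∫ p, (eN (m₁ - m₂) + f p) ∂π :=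
        integral_mono hg_int ((integrable_const _).add hf_int) htri
    _ = eN (m₁ - m₂) + ∫ p, f p ∂π := by
        rw [integral_add (integrable_const _) hf_int, integral_const]; simp
    _ ≤ eN (m₁ - m₂) + Real.sqrt (∫ p, f p ^ 2 ∂π) :=
        add_le_add_right (cs π f hfL2 hf0) _
    _ = _ := by rw [hint_fsq]
end
end

section
/- For a Gaussian measure μ = 𝒩(m, Σ) on ℝⁿ with Σ invertible and m ≠ 0, the scaling invariant inequality index τ(μ) defined via the whitened Fourier transform equals (2√e)⁻¹ (mᵀ Σ⁻¹ m)^{−1/2}, i.e. it is proportional to the reciprocal of the Mahalanobis norm of m. -/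
open MeasureTheory ProbabilityTheory Matrix

section auxlemmas
open Complex MeasureTheory.Measure
open scoped NNReal ENNReal


theorem my_integral_pi {n : ℕ} (μ : Fin n → Measure ℝ) [∀ i, SigmaFinite (μ i)]
    (f : Fin n → ℝ → ℂ) :
    ∫ x : Fin n → ℝ, ∏ i, f i (x i) ∂Measure.pi μ = ∏ i, ∫ x, f i x ∂μ i := by
  induction n with
  | zero => simp [Measure.real, Measure.pi_univ]
  | succ n ih =>
      calc
        _ = ∫ x : ℝ × (Fin n → ℝ),
            f 0 x.1 * ∏ i : Fin n, f (Fin.succ i) (x.2 i)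
              ∂(μ 0).prod (Measure.pi (fun i => μ (Fin.succ i))) := by
          rw [← ((measurePreserving_piFinSuccAbove μ 0).symm).integral_comp']
          simp_rw [MeasurableEquiv.piFinSuccAbove_symm_apply, Fin.insertNthEquiv,
            Fin.prod_univ_succ, Fin.insertNth_zero, Equiv.coe_fn_mk, Fin.cons_succ,
            Fin.zero_succAbove, Fin.cons_zero]
          simp
        _ = (∫ x, f 0 x ∂μ 0) * ∏ i : Fin n, ∫ x, f (Fin.succ i) x ∂μ (Fin.succ i) := by
          rw [← ih, ← integral_prod_mul]
        _ = ∏ i, ∫ x, f i x ∂μ i := by rw [Fin.prod_univ_succ]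


lemma intg_xexp (c : ℂ) : Integrable (fun x : ℝ => (x:ℂ) * cexp (-(1/2) * x^2 + c * x)) := by
  have h1 := integrable_cexp_quadratic (b := (1/2:ℂ)) (by norm_num) (c+1) 0
  have h2 := integrable_cexp_quadratic (b := (1/2:ℂ)) (by norm_num) (c-1) 0
  refine ((h1.norm.add h2.norm).mono' ?_ ?_)
  · exact (Complex.continuous_ofReal.mul (Complex.continuous_exp.comp (by continuity))).aestronglyMeasurable
  · filter_upwards with x
    have hx : |x| ≤ Real.exp x + Real.exp (-x) := by
      rcases abs_cases x with ⟨h, _⟩ | ⟨h, _⟩ <;> rw [h]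
      · nlinarith [Real.add_one_le_exp x, Real.exp_nonneg (-x)]
      · nlinarith [Real.add_one_le_exp (-x), Real.exp_nonneg x]
    have hre : ∀ d : ℂ, ((-(1/2:ℂ) * x^2 + d * x + 0):ℂ).re = -(1/2)*x^2 + d.re * x := by
      intro d
      simp [Complex.add_re, Complex.mul_re, ← Complex.ofReal_pow]
    have hre' : ((-(1/2:ℂ) * x^2 + c * x):ℂ).re = -(1/2)*x^2 + c.re * x := by
      simpa using hre c
    simp only [Pi.add_apply, norm_mul, Complex.norm_exp,
      Complex.norm_real, Real.norm_eq_abs, hre, hre']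
    have e1 : Real.exp (-(1/2)*x^2 + (c+1).re * x) = Real.exp x * Real.exp (-(1/2)*x^2 + c.re * x) := by
      rw [← Real.exp_add]; congr 1; simp [Complex.add_re]; ring
    have e2 : Real.exp (-(1/2)*x^2 + (c-1).re * x) = Real.exp (-x) * Real.exp (-(1/2)*x^2 + c.re * x) := by
      rw [← Real.exp_add]; congr 1; simp [Complex.sub_re]; ring
    rw [e1, e2]
    nlinarith [Real.exp_nonneg (-(1/2)*x^2 + c.re * x)]

lemma int_xexp (c : ℂ) :
    ∫ x : ℝ, (x:ℂ) * cexp (-(1/2) * x^2 + c * x) = c * ∫ x : ℝ, cexp (-(1/2) * x^2 + c * x) := by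
  have hF : Integrable (fun x : ℝ => cexp (-(1/2) * x^2 + c * x)) := by
    simpa using integrable_cexp_quadratic (b := (1/2:ℂ)) (by norm_num) c 0
  have hxF := intg_xexp c
  have hderiv : ∀ x : ℝ, HasDerivAt (fun y : ℝ => cexp (-(1/2) * y^2 + c * y))
      ((c - x) * cexp (-(1/2) * x^2 + c * x)) x := by
    intro x
    have hid : HasDerivAt (fun y : ℝ => ((y:ℂ))) 1 x := Complex.ofRealCLM.hasDerivAt
    have hsq : HasDerivAt (fun y : ℝ => ((y:ℂ))^2) (2*(x:ℂ)) x := by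
      have := hid.mul hid
      simp only [← pow_two] at this
      convert this using 1
      · rfl
      · funext y; simp [pow_two]
      ring
    have h1 : HasDerivAt (fun y : ℝ => (-(1/2:ℂ) * y^2 + c * y)) (-(1/2:ℂ)*(2*x) + c*1) x :=
      (hsq.const_mul _).add (hid.const_mul c)
    have := h1.cexp
    convert this using 1
    ring
  have hzero : ∫ x : ℝ, (c - x) * cexp (-(1/2) * x^2 + c * x) = 0 := by
    apply integral_eq_zero_of_hasDerivAt_of_integrable hderiv ?_ hF
    have : (fun x : ℝ => (c - x) * cexp (-(1/2) * x^2 + c * x))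
        = fun x : ℝ => c * cexp (-(1/2) * x^2 + c * x) - (x:ℂ) * cexp (-(1/2) * x^2 + c * x) := by
      funext x; ring
    rw [this]
    exact (hF.const_mul c).sub hxF
  have : ∫ x : ℝ, (c - x) * cexp (-(1/2) * x^2 + c * x)
      = c * (∫ x : ℝ, cexp (-(1/2) * x^2 + c * x)) - ∫ x : ℝ, (x:ℂ) * cexp (-(1/2) * x^2 + c * x) := by
    rw [← integral_const_mul, ← integral_sub (hF.const_mul c) hxF]
    congr 1; funext x; ring
  rw [this] at hzero
  exact (sub_eq_zero.mp hzero).symm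


lemma pdf01 (x : ℝ) : gaussianPDFReal 0 1 x
    = (Real.sqrt (2 * Real.pi))⁻¹ * Real.exp (-(1/2) * x^2) := by
  rw [gaussianPDFReal]
  norm_num
  ring_nf
  exact Or.inl trivial

lemma gauss_int (g : ℝ → ℂ) :
    ∫ x, g x ∂gaussianReal 0 1 = ∫ x, (gaussianPDFReal 0 1 x : ℂ) * g x := by
  rw [gaussianReal_of_var_ne_zero 0 one_ne_zero]
  have h : gaussianPDF 0 1 = fun x => ((Real.toNNReal (gaussianPDFReal 0 1 x) : ℝ≥0) : ℝ≥0∞) := by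
    funext x; rfl
  rw [h, integral_withDensity_eq_integral_smul
    ((measurable_gaussianPDFReal 0 1).real_toNNReal) g]
  congr 1
  funext x
  rw [NNReal.smul_def, Real.coe_toNNReal _ (gaussianPDFReal_nonneg 0 1 x)]
  simp [Complex.real_smul]

lemma int_exp_quad (c : ℂ) :
    ∫ x : ℝ, cexp (-(1/2) * x^2 + c * x) = (2*(Real.pi:ℂ))^(1/2:ℂ) * cexp (c^2/2) := by
  have := integral_cexp_quadratic (b := -(1/2:ℂ)) (by norm_num) c 0
  simp only [add_zero] at this
  rw [this]
  congr 1
  · congr 1; ring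
  · congr 1; ring

lemma sqrt_two_pi_c : ((Real.sqrt (2 * Real.pi) : ℝ) : ℂ) = (2 * (Real.pi:ℂ)) ^ (1/2 : ℂ) := by
  have h0 : (0:ℝ) ≤ 2 * Real.pi := by positivity
  have h := Complex.ofReal_cpow h0 (1/2 : ℝ)
  rw [Real.sqrt_eq_rpow, h]
  push_cast
  norm_num

lemma inv_sqrt_cancel : (((Real.sqrt (2*Real.pi))⁻¹:ℝ):ℂ) * (2 * (Real.pi:ℂ)) ^ (1/2 : ℂ) = 1 := by
  rw [← sqrt_two_pi_c, ← Complex.ofReal_mul, inv_mul_cancel₀ (by positivity), Complex.ofReal_one]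

lemma negI_sq (t : ℝ) : ((-Complex.I * (t:ℂ))^2/2) = (-(t:ℂ)^2/2) := by
  rw [mul_pow, neg_sq, Complex.I_sq]; ring

lemma gauss_char (t : ℝ) :
    ∫ x : ℝ, cexp (-Complex.I * (t * x)) ∂gaussianReal 0 1 = cexp (-(t:ℂ)^2/2) := by
  rw [gauss_int]
  have h : ∀ x : ℝ, (gaussianPDFReal 0 1 x : ℂ) * cexp (-Complex.I * (t * x))
      = (((Real.sqrt (2 * Real.pi))⁻¹:ℝ):ℂ) * cexp (-(1/2) * x^2 + (-Complex.I * t) * x) := by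
    intro x
    rw [pdf01]
    push_cast [Complex.ofReal_exp]
    rw [Complex.exp_add]
    ring_nf
  simp_rw [h]
  rw [integral_const_mul, int_exp_quad, negI_sq]
  linear_combination cexp (-(t:ℂ)^2/2) * inv_sqrt_cancel

lemma gauss_xchar (t : ℝ) :
    ∫ x : ℝ, (x:ℂ) * cexp (-Complex.I * (t * x)) ∂gaussianReal 0 1
      = -Complex.I * t * cexp (-(t:ℂ)^2/2) := by
  rw [gauss_int]
  have h : ∀ x : ℝ, (gaussianPDFReal 0 1 x : ℂ) * ((x:ℂ) * cexp (-Complex.I * (t * x)))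
      = (((Real.sqrt (2 * Real.pi))⁻¹:ℝ):ℂ) * ((x:ℂ) * cexp (-(1/2) * x^2 + (-Complex.I * t) * x)) := by
    intro x
    rw [pdf01]
    push_cast [Complex.ofReal_exp]
    rw [Complex.exp_add]
    ring_nf
  simp_rw [h]
  rw [integral_const_mul, int_xexp (-Complex.I * t), int_exp_quad, negI_sq]
  linear_combination (-Complex.I*t*cexp (-(t:ℂ)^2/2)) * inv_sqrt_cancel

lemma gauss_affine (t a : ℝ) :
    ∫ x : ℝ, -Complex.I * ((x:ℂ) + a) * cexp (-Complex.I * (t * x)) ∂gaussianReal 0 1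
      = (-(t:ℂ) - Complex.I * a) * cexp (-(t:ℂ)^2/2) := by
  rw [gauss_int]
  have h : ∀ x : ℝ, (gaussianPDFReal 0 1 x : ℂ) * (-Complex.I * ((x:ℂ) + a) * cexp (-Complex.I * (t * x)))
      = (((Real.sqrt (2 * Real.pi))⁻¹:ℝ):ℂ) * (-Complex.I) *
          (((x:ℂ) * cexp (-(1/2) * x^2 + (-Complex.I * t) * x))
            + (a:ℂ) * cexp (-(1/2) * x^2 + (-Complex.I * t) * x)) := by
    intro x
    rw [pdf01]
    push_cast [Complex.ofReal_exp]
    rw [Complex.exp_add]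
    ring_nf
  simp_rw [h]
  have hc : Integrable (fun x : ℝ => cexp (-(1/2) * x^2 + (-Complex.I*t) * x)) := by
    have := integrable_cexp_quadratic (b := (1/2:ℂ)) (by norm_num) (-Complex.I*t) 0
    simpa using this
  rw [integral_const_mul,
    integral_add (intg_xexp _) (hc.const_mul (a:ℂ)),
    int_xexp, integral_const_mul, int_exp_quad, negI_sq]
  linear_combination ((-(t:ℂ) - Complex.I*(a:ℂ)) * cexp (-(t:ℂ)^2/2)) * inv_sqrt_cancel + ((2*(Real.pi:ℂ))^(1/2:ℂ) * (((Real.sqrt (2*Real.pi))⁻¹:ℝ):ℂ) * cexp (-(t:ℂ)^2/2) * (t:ℂ)) * Complex.I_sq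


end auxlemmas

noncomputable section

/-- The standard Gaussian measure on `ℝⁿ` (mean `0`, identity covariance). -/
def stdGaussian (n : ℕ) : Measure (Fin n → ℝ) :=
  Measure.pi fun _ => gaussianReal 0 1

/-- The scaling-invariant Fourier inequality index
`τ(μ) = sup_ξ |∇f̂*(0) f̂*(ξ) − ∇f̂*(ξ)| / (2 |∇f̂*(0)|)`, computed from the
characteristic function `f̂*` of the whitened measure `μ*`. -/
def tauIdx {n : ℕ} (μstar : Measure (Fin n → ℝ)) : ℝ :=
  ⨆ ξ : Fin n → ℝ,
    cN (fun j => gradCharF μstar 0 j * charF μstar ξ - gradCharF μstar ξ j) /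
      (2 * cN (gradCharF μstar 0))


section mainlemmas
open Complex

lemma charF_eq {n : ℕ} (a ξ : Fin n → ℝ) :
    charF ((stdGaussian n).map (· + a)) ξ
      = cexp (-Complex.I * ((∑ i, ξ i * a i : ℝ):ℂ) - ((∑ i, (ξ i)^2 : ℝ):ℂ)/2) := by
  rw [charF, integral_map (by fun_prop) (Continuous.aestronglyMeasurable (by fun_prop))]
  have h : ∀ x : Fin n → ℝ, cexp (-Complex.I * ∑ i, (ξ i:ℂ) * (((x + a) i : ℝ):ℂ))
      = cexp (-Complex.I * ((∑ i, ξ i * a i : ℝ):ℂ)) *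
        ∏ i, (fun t : ℝ => cexp (-Complex.I * ((ξ i:ℂ) * (t:ℂ)))) (x i) := by
    intro x
    rw [← Complex.exp_sum, ← Complex.exp_add]
    congr 1
    simp only [Pi.add_apply]
    push_cast
    rw [Finset.mul_sum, Finset.mul_sum, ← Finset.sum_add_distrib]
    exact Finset.sum_congr rfl (by intros; ring)
  simp_rw [h]
  rw [integral_const_mul, _root_.stdGaussian,
    my_integral_pi (fun _ => gaussianReal 0 1) (fun i t => cexp (-Complex.I * ((ξ i:ℂ) * (t:ℂ))))]
  simp_rw [gauss_char]
  rw [← Complex.exp_sum, ← Complex.exp_add]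
  congr 1
  push_cast
  simp [neg_div, Finset.sum_neg_distrib, Finset.sum_div, sub_eq_add_neg]

lemma gradCharF_eq {n : ℕ} (a ξ : Fin n → ℝ) (j : Fin n) :
    gradCharF ((stdGaussian n).map (· + a)) ξ j
      = (-(ξ j:ℂ) - Complex.I * (a j:ℂ)) *
          cexp (-Complex.I * ((∑ i, ξ i * a i : ℝ):ℂ) - ((∑ i, (ξ i)^2 : ℝ):ℂ)/2) := by
  rw [gradCharF, integral_map (by fun_prop) (Continuous.aestronglyMeasurable (by fun_prop))]
  have h : ∀ x : Fin n → ℝ,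
      -Complex.I * (((x + a) j : ℝ):ℂ) * cexp (-Complex.I * ∑ i, (ξ i:ℂ) * (((x + a) i : ℝ):ℂ))
      = cexp (-Complex.I * ((∑ i, ξ i * a i : ℝ):ℂ)) *
        ∏ i, (fun t : ℝ => (if i = j then -Complex.I * ((t:ℂ) + (a j:ℂ)) else 1)
            * cexp (-Complex.I * ((ξ i:ℂ) * (t:ℂ)))) (x i) := by
    intro x
    rw [Finset.prod_mul_distrib, Finset.prod_ite_eq']
    simp only [Finset.mem_univ, if_true]
    rw [← Complex.exp_sum]
    rw [show (cexp (-Complex.I * ((∑ i, ξ i * a i : ℝ):ℂ)) *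
        ((-Complex.I * (((x j:ℝ):ℂ) + (a j:ℂ))) * cexp (∑ i, -Complex.I * ((ξ i:ℂ) * ((x i:ℝ):ℂ)))))
      = (-Complex.I * (((x j:ℝ):ℂ) + (a j:ℂ))) * (cexp (-Complex.I * ((∑ i, ξ i * a i : ℝ):ℂ)) *
          cexp (∑ i, -Complex.I * ((ξ i:ℂ) * ((x i:ℝ):ℂ)))) from by ring]
    rw [← Complex.exp_add]
    congr 1
    · simp [Pi.add_apply]
    · simp only [Pi.add_apply]
      push_cast
      rw [Finset.mul_sum, Finset.mul_sum, ← Finset.sum_add_distrib]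
      exact congrArg _ (Finset.sum_congr rfl (by intros; ring))
  simp_rw [h]
  rw [integral_const_mul, _root_.stdGaussian,
    my_integral_pi (fun _ => gaussianReal 0 1)
      (fun i t => (if i = j then -Complex.I * ((t:ℂ) + (a j:ℂ)) else 1)
        * cexp (-Complex.I * ((ξ i:ℂ) * (t:ℂ))))]
  have hint : ∀ i, (∫ t : ℝ, (if i = j then -Complex.I * ((t:ℂ) + (a j:ℂ)) else 1)
      * cexp (-Complex.I * ((ξ i:ℂ) * (t:ℂ))) ∂gaussianReal 0 1)
      = (if i = j then (-(ξ i:ℂ) - Complex.I * (a j:ℂ)) else 1) * cexp (-(ξ i:ℂ)^2/2) := by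
    intro i
    by_cases hij : i = j
    · simp only [hij, if_true]
      exact gauss_affine (ξ j) (a j)
    · simp only [hij, if_false, one_mul]
      exact gauss_char (ξ i)
  simp_rw [hint]
  rw [Finset.prod_mul_distrib, Finset.prod_ite_eq']
  simp only [Finset.mem_univ, if_true]
  rw [← Complex.exp_sum]
  rw [show ∀ z w u : ℂ, z * (w * u) = w * (z * u) from fun z w u => by ring]
  rw [← Complex.exp_add]
  congr 2
  push_cast
  simp [neg_div, Finset.sum_neg_distrib, Finset.sum_div, sub_eq_add_neg]


end mainlemmas

open Complex in

/-- For a Gaussian `μ = 𝒩(m, Σ)` with `Σ` invertible (positive definite) and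
`m ≠ 0`, whose whitened version is `μ* = 𝒩(W m, I)` with `W Σ Wᵀ = 1`, the
scaling-invariant index equals `τ(μ) = (2√e)⁻¹ (mᵀ Σ⁻¹ m)^{-1/2}`. -/
theorem stmt18 {n : ℕ} (m : Fin n → ℝ) (hm : m ≠ 0)
    (S W : Matrix (Fin n) (Fin n) ℝ) (hS : S.PosDef) (hW : W * S * Wᵀ = 1) :
    tauIdx ((stdGaussian n).map (· + W.mulVec m))
      = (1 / (2 * Real.sqrt (Real.exp 1))) * (1 / Real.sqrt (m ⬝ᵥ S⁻¹.mulVec m)) := by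
  have hn : 0 < n := Nat.pos_of_ne_zero (by rintro rfl; exact hm (funext fun i => i.elim0))
  set a : Fin n → ℝ := W.mulVec m with ha
  -- matrix identities
  have h1 : W * (S * Wᵀ) = 1 := by rw [← Matrix.mul_assoc]; exact hW
  have h2 : (S * Wᵀ) * W = 1 := mul_eq_one_comm.mp h1
  have h3 : S * (Wᵀ * W) = 1 := by rw [← Matrix.mul_assoc]; exact h2
  have hSinv : S⁻¹ = Wᵀ * W := Matrix.inv_eq_right_inv h3
  have hma : m ⬝ᵥ S⁻¹.mulVec m = ∑ j, (a j)^2 := by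
    rw [hSinv, ← Matrix.mulVec_mulVec, Matrix.dotProduct_mulVec, Matrix.vecMul_transpose, ha]
    simp [dotProduct, pow_two]
  have hane : a ≠ 0 := by
    intro h0
    apply hm
    have h0' : W *ᵥ m = 0 := by rw [← ha]; exact h0
    have h4 := congrArg (fun v => (S * Wᵀ).mulVec v) h0'
    simpa [Matrix.mulVec_mulVec, h2, Matrix.one_mulVec] using h4
  have hsum_pos : 0 < ∑ j, (a j)^2 := by
    rcases Function.ne_iff.mp hane with ⟨j, hj⟩
    have : (0:ℝ) < (a j)^2 := lt_of_le_of_ne (sq_nonneg _) (Ne.symm (pow_ne_zero 2 hj))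
    exact Finset.sum_pos' (fun i _ => sq_nonneg _) ⟨j, Finset.mem_univ j, this⟩
  set A : ℝ := Real.sqrt (∑ j, (a j)^2) with hA
  have hApos : 0 < A := Real.sqrt_pos.mpr hsum_pos
  -- gradient at 0
  have hgrad0 : ∀ j, gradCharF ((stdGaussian n).map (· + a)) 0 j = -Complex.I * (a j : ℂ) := by
    intro j
    rw [gradCharF_eq]
    simp
  have hcN0 : cN (gradCharF ((stdGaussian n).map (· + a)) 0) = A := by
    rw [cN]
    congr 1
    refine Finset.sum_congr rfl fun j _ => ?_
    rw [hgrad0]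
    simp [Complex.norm_real, _root_.sq_abs]
  -- the numerator
  have habsC : ∀ ξ : Fin n → ℝ, ‖(cexp (-Complex.I * ((∑ i, ξ i * a i : ℝ):ℂ)
      - ((∑ i, (ξ i)^2 : ℝ):ℂ)/2))‖ = Real.exp (-(∑ i, (ξ i)^2)/2) := by
    intro ξ
    rw [Complex.norm_exp]
    congr 1
    generalize (∑ i, ξ i * a i : ℝ) = s
    generalize (∑ i, (ξ i)^2 : ℝ) = q
    simp [Complex.sub_re, Complex.mul_re, Complex.div_re, Complex.normSq]
    ring
  have hnum : ∀ ξ : Fin n → ℝ,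
      cN (fun j => gradCharF ((stdGaussian n).map (· + a)) 0 j
          * charF ((stdGaussian n).map (· + a)) ξ
          - gradCharF ((stdGaussian n).map (· + a)) ξ j)
      = Real.sqrt ((∑ i, (ξ i)^2) * Real.exp (-(∑ i, (ξ i)^2))) := by
    intro ξ
    rw [cN]
    congr 1
    have hj : ∀ j, gradCharF ((stdGaussian n).map (· + a)) 0 j
          * charF ((stdGaussian n).map (· + a)) ξ
          - gradCharF ((stdGaussian n).map (· + a)) ξ j
        = (ξ j : ℂ) * cexp (-Complex.I * ((∑ i, ξ i * a i : ℝ):ℂ)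
            - ((∑ i, (ξ i)^2 : ℝ):ℂ)/2) := by
      intro j
      rw [hgrad0, charF_eq, gradCharF_eq]
      ring
    calc (∑ j, ‖(gradCharF ((stdGaussian n).map (· + a)) 0 j
          * charF ((stdGaussian n).map (· + a)) ξ
          - gradCharF ((stdGaussian n).map (· + a)) ξ j)‖ ^2)
        = ∑ j, (ξ j)^2 * Real.exp (-(∑ i, (ξ i)^2)) := by
          refine Finset.sum_congr rfl fun j _ => ?_
          rw [hj, norm_mul, habsC, mul_pow, Complex.norm_real, Real.norm_eq_abs, _root_.sq_abs,
            ← Real.exp_nat_mul]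
          push_cast
          ring_nf
      _ = (∑ i, (ξ i)^2) * Real.exp (-(∑ i, (ξ i)^2)) := by
          rw [← Finset.sum_mul]
  -- rewrite tauIdx
  have htau : tauIdx ((stdGaussian n).map (· + a))
      = ⨆ ξ : Fin n → ℝ, Real.sqrt ((∑ i, (ξ i)^2) * Real.exp (-(∑ i, (ξ i)^2))) / (2 * A) := by
    rw [tauIdx]
    exact iSup_congr fun ξ => by rw [hnum, hcN0]
  rw [htau]
  -- the sup
  have hbound : ∀ ξ : Fin n → ℝ,
      Real.sqrt ((∑ i, (ξ i)^2) * Real.exp (-(∑ i, (ξ i)^2))) / (2 * A)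
        ≤ Real.sqrt (Real.exp 1)⁻¹ / (2 * A) := by
    intro ξ
    set q := ∑ i, (ξ i)^2 with hq
    have hq0 : 0 ≤ q := Finset.sum_nonneg fun i _ => sq_nonneg _
    have key : q * Real.exp (-q) ≤ (Real.exp 1)⁻¹ := by
      have h1 : q ≤ Real.exp (q - 1) := by
        have := Real.add_one_le_exp (q - 1)
        linarith
      have h2 : q * Real.exp (-q) ≤ Real.exp (q-1) * Real.exp (-q) :=
        mul_le_mul_of_nonneg_right h1 (Real.exp_nonneg _)
      calc q * Real.exp (-q) ≤ Real.exp (q-1) * Real.exp (-q) := h2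
        _ = (Real.exp 1)⁻¹ := by rw [← Real.exp_add, ← Real.exp_neg]; ring_nf
    gcongr
  have hval : Real.sqrt (Real.exp 1)⁻¹ / (2 * A)
      = (1 / (2 * Real.sqrt (Real.exp 1))) * (1 / Real.sqrt (m ⬝ᵥ S⁻¹.mulVec m)) := by
    rw [hma, ← hA, Real.sqrt_inv]
    field_simp
  rw [← hval]
  apply le_antisymm
  · exact ciSup_le hbound
  · have hx0 : ∃ ξ0 : Fin n → ℝ, (∑ i, (ξ0 i)^2) = 1 := by
      refine ⟨fun i => if i = ⟨0, hn⟩ then 1 else 0, ?_⟩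
      simp [ite_pow, Finset.sum_ite_eq']
    obtain ⟨ξ0, hξ0⟩ := hx0
    have := le_ciSup (f := fun ξ : Fin n → ℝ =>
        Real.sqrt ((∑ i, (ξ i)^2) * Real.exp (-(∑ i, (ξ i)^2))) / (2 * A))
      ⟨Real.sqrt (Real.exp 1)⁻¹ / (2 * A), by rintro _ ⟨ξ, rfl⟩; exact hbound ξ⟩ ξ0
    calc Real.sqrt (Real.exp 1)⁻¹ / (2 * A)
        = Real.sqrt ((∑ i, (ξ0 i)^2) * Real.exp (-(∑ i, (ξ0 i)^2))) / (2 * A) := by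
          rw [hξ0]; norm_num [Real.exp_neg]
      _ ≤ _ := this
end
end
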